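/- arXiv:1701.04506 — 2 statements merged into one kernel-verified Lean document; each statement's English description precedes it below -/
import Mathlib

section
/- Every nonzero natural number N has a unique representation in a negative integer base B ≤ -2 using digits in {0, 1, ..., |B|-1}: there exist digits d_0, ..., d_k with d_k ≠ 0 such that N = Σ d_i · B^i. -/
def nrep (b : ℤ) (n : ℤ) : List ℤ :=
  if h : 2 ≤ b ∧ n ≠ 0 then (n % b) :: nrep b (-(n / b)) else []
termination_by 2 * n.natAbs + (if 0 ≤ n then 0 else 1)
decreasing_by
  obtain ⟨hb, hn⟩ := h
  rcases lt_trichotomy n 0 with hlt | h0 | hgt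
  · have hq0 : n / b < 0 := Int.ediv_neg_of_neg_of_pos hlt (by omega)
    have hle : n ≤ n / b := by
      rw [Int.le_ediv_iff_mul_le (by omega : (0:ℤ) < b)]
      nlinarith
    split_ifs <;> omega
  · exact absurd h0 hn
  · have hq0 : 0 ≤ n / b := Int.ediv_nonneg (by omega) (by omega)
    have hlt : n / b < n := by
      rw [Int.ediv_lt_iff_lt_mul (by omega)]
      nlinarith
    split_ifs <;> omega

def nval (B : ℤ) : List ℤ → ℤ
  | [] => 0
  | d :: L => d + B * nval B L

lemma nrep_zero (b : ℤ) : nrep b 0 = [] := by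
  rw [nrep]; simp

lemma nval_nrep (b : ℤ) (hb : 2 ≤ b) (n : ℤ) : nval (-b) (nrep b n) = n := by
  induction n using nrep.induct b with
  | case1 n h ih =>
    rw [nrep, dif_pos h, nval, ih]
    have := Int.emod_add_mul_ediv n b
    ring_nf
    linarith
  | case2 n h =>
    have hn : n = 0 := by
      by_contra hne; exact h ⟨hb, hne⟩
    rw [hn, nrep_zero, nval]

lemma nrep_digits (b : ℤ) (hb : 2 ≤ b) (n : ℤ) : ∀ d ∈ nrep b n, 0 ≤ d ∧ d < b := by
  induction n using nrep.induct b with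
  | case1 n h ih =>
    rw [nrep, dif_pos h]
    intro d hd
    rcases List.mem_cons.1 hd with rfl | hd
    · exact ⟨Int.emod_nonneg n (by omega), Int.emod_lt_of_pos n (by omega)⟩
    · exact ih d hd
  | case2 n h =>
    rw [nrep, dif_neg h]; simp

lemma nrep_ne_nil (b : ℤ) (hb : 2 ≤ b) (n : ℤ) (hn : n ≠ 0) : nrep b n ≠ [] := by
  rw [nrep, dif_pos ⟨hb, hn⟩]; simp

lemma nrep_last (b : ℤ) (hb : 2 ≤ b) (n : ℤ) : (nrep b n).getLast? ≠ some 0 := by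
  induction n using nrep.induct b with
  | case1 n h ih =>
    rw [nrep, dif_pos h]
    by_cases hq : -(n / b) = 0
    · rw [hq, nrep_zero]
      simp only [List.getLast?_singleton, ne_eq, Option.some.injEq]
      intro hr
      have h1 := Int.emod_add_mul_ediv n b
      have h2 : n = 0 := by
        have hq' : n / b = 0 := by omega
        rw [hr, hq'] at h1
        omega
      exact h.2 h2
    · have hne := nrep_ne_nil b hb _ hq
      obtain ⟨a, L', hL⟩ := List.exists_cons_of_ne_nil hne
      rw [hL]
      rw [hL] at ih
      rwa [List.getLast?_cons_cons]
  | case2 n h =>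
    rw [nrep, dif_neg h]; simp

lemma nval_unique (b : ℤ) (hb : 2 ≤ b) (L : List ℤ)
    (hd : ∀ d ∈ L, 0 ≤ d ∧ d < b) (hl : L.getLast? ≠ some 0) :
    nrep b (nval (-b) L) = L := by
  induction L with
  | nil => exact nrep_zero b
  | cons d L ih =>
    have hdb := hd d List.mem_cons_self
    have hdL : ∀ x ∈ L, 0 ≤ x ∧ x < b := fun x hx => hd x (List.mem_cons_of_mem d hx)
    set v := nval (-b) L with hv
    have hval : nval (-b) (d :: L) = d + (-b) * v := rfl
    by_cases hLnil : L = []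
    · subst hLnil
      have hd0 : d ≠ 0 := by
        simp only [List.getLast?_singleton, ne_eq, Option.some.injEq] at hl; exact hl
      have hv0 : v = 0 := rfl
      rw [hval, hv0]
      have h1 : (d + -b * 0) = d := by ring
      rw [h1]
      rw [nrep, dif_pos ⟨hb, hd0⟩]
      have hm : d % b = d := Int.emod_eq_of_lt hdb.1 hdb.2
      have hdv : d / b = 0 := Int.ediv_eq_zero_of_lt hdb.1 hdb.2
      rw [hm, hdv]
      simp [nrep_zero]
    · have hlL : L.getLast? ≠ some 0 := by
        obtain ⟨a, L', hL⟩ := List.exists_cons_of_ne_nil hLnil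
        rw [hL] at hl ⊢
        rwa [List.getLast?_cons_cons] at hl
      have hrec := ih hdL hlL
      set n := d + (-b) * v with hn
      have hne : n ≠ 0 := by
        intro h0
        rw [hn] at h0
        have hdv : d = b * v := by linarith
        have hv1 : v < 1 := by nlinarith [hdb.1, hdb.2]
        have hv2 : 0 ≤ v := by nlinarith [hdb.1, hdb.2]
        have hv0 : v = 0 := by omega
        rw [hv0] at hrec
        rw [nrep_zero] at hrec
        exact hLnil hrec.symm
      have hmod : n % b = d := by
        have hne2 : n = d + b * (-v) := by rw [hn]; ring
        rw [hne2, Int.add_mul_emod_self_left]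
        exact Int.emod_eq_of_lt hdb.1 hdb.2
      have hdiv : n / b = -v := by
        have hne2 : n = d + (-v) * b := by rw [hn]; ring
        rw [hne2, Int.add_mul_ediv_right _ _ (by omega : (b:ℤ) ≠ 0)]
        rw [Int.ediv_eq_zero_of_lt hdb.1 hdb.2]
        ring
      rw [hval, nrep, dif_pos ⟨hb, hne⟩, hmod, hdiv, neg_neg, hrec]

lemma nval_eq_sum (B : ℤ) (L : List ℤ) :
    (∑ i ∈ Finset.range L.length, L.getD i 0 * B ^ i) = nval B L := by
  induction L with
  | nil => simp [nval]
  | cons d L ih =>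
    rw [List.length_cons, Finset.sum_range_succ']
    simp only [List.getD_cons_succ, List.getD_cons_zero, pow_zero, mul_one, pow_succ]
    rw [nval]
    rw [← ih]
    rw [Finset.sum_congr rfl (fun i _ => by ring : ∀ i ∈ Finset.range L.length,
      L.getD i 0 * (B ^ i * B) = B * (L.getD i 0 * B ^ i))]
    rw [← Finset.mul_sum]
    ring

/-- Every nonzero natural number has a unique representation in a negative
integer base `B ≤ -2` with digits in `{0,…,|B|-1}` and nonzero leading digit. -/
theorem negative_base_unique_representation (B : ℤ) (hB : B ≤ -2) (N : ℕ) (hN : N ≠ 0) :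
    ∃! L : List ℤ,
      (∀ d ∈ L, 0 ≤ d ∧ d < |B|) ∧ L ≠ [] ∧ L.getLast? ≠ some 0 ∧
      (N : ℤ) = ∑ i ∈ Finset.range L.length, L.getD i 0 * B ^ i := by
  set b : ℤ := -B with hb'
  have hb : 2 ≤ b := by omega
  have habs : |B| = b := by rw [abs_of_neg (by omega : B < 0)]
  have hBb : B = -b := by omega
  have hNz : (N : ℤ) ≠ 0 := by exact_mod_cast hN
  refine ⟨nrep b N, ⟨?_, ?_, ?_, ?_⟩, ?_⟩
  · rw [habs]; exact nrep_digits b hb N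
  · exact nrep_ne_nil b hb N hNz
  · exact nrep_last b hb N
  · rw [nval_eq_sum, hBb, nval_nrep b hb]
  · rintro L ⟨h1, h2, h3, h4⟩
    rw [habs] at h1
    rw [nval_eq_sum, hBb] at h4
    rw [← nval_unique b hb L h1 h3, ← h4]
end

section
/- Negative beta expansion identity: for B > 1 real and x ∈ [l_B, r_B), x = Σ_{j=1}^{∞} d_j (-B)^{-j} where d_j = ⌊-B·T_B^{j-1}(x) - l_B⌋ and T_B(x) = -Bx - ⌊-Bx - l_B⌋, l_B = -B/(B+1), r_B = 1/(B+1). -/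
/-- Negative beta expansion identity (Ito–Sadahiro): for `B > 1` and
`x ∈ [l_B, r_B)`, `x = Σ_{j≥1} d_j (-B)^{-j}` where `d_j` is the digit of the
`(j-1)`-st iterate of the negative beta transformation. -/
theorem neg_beta_expansion (B : ℝ) (hB : 1 < B) (l : ℝ) (hl : l = -B / (B + 1))
    (T : ℝ → ℝ) (hT : ∀ y, T y = -B * y - ⌊-B * y - l⌋)
    (x : ℝ) (hx : l ≤ x ∧ x < 1 / (B + 1))
    (d : ℕ → ℤ) (hd : ∀ j, d j = ⌊-B * (T^[j] x) - l⌋) :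
    x = ∑' j : ℕ, (d j : ℝ) * (-B) ^ (-(j + 1 : ℤ)) := by
  have hB0 : (0:ℝ) < B := lt_trans one_pos hB
  have hB1 : (0:ℝ) < B + 1 := by linarith
  have hBne : (-B : ℝ) ≠ 0 := by intro h; nlinarith
  have hl1 : l + 1 = 1 / (B + 1) := by
    rw [hl]; field_simp; ring
  -- the iterates stay in [l, l+1)
  have hinv : ∀ j : ℕ, l ≤ T^[j] x ∧ T^[j] x < l + 1 := by
    intro j
    induction j with
    | zero => simpa [hl1] using hx
    | succ n ih =>
      rw [Function.iterate_succ_apply', hT]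
      have h1 : -B * T^[n] x - ↑⌊-B * T^[n] x - l⌋ = Int.fract (-B * T^[n] x - l) + l := by
        rw [← Int.self_sub_floor]; ring
      constructor
      · rw [h1]; have := Int.fract_nonneg (-B * T^[n] x - l); linarith
      · rw [h1]; have := Int.fract_lt_one (-B * T^[n] x - l); linarith
  have key : ∀ j : ℕ, T^[j+1] x = -B * T^[j] x - d j := by
    intro j
    rw [Function.iterate_succ_apply', hT, hd]
  set f : ℕ → ℝ := fun j => (d j : ℝ) * (-B) ^ (-(j + 1 : ℤ)) with hf
  -- telescoping identity
  have main : ∀ n : ℕ, x = (∑ j ∈ Finset.range n, f j) + (-B) ^ (-(n:ℤ)) * T^[n] x := by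
    intro n
    induction n with
    | zero => simp
    | succ n ih =>
      rw [Finset.sum_range_succ]
      have hz : (-B : ℝ) ^ (-(n:ℤ)) = (-B) ^ (-((n:ℤ) + 1)) * (-B) := by
        rw [← zpow_add_one₀ hBne]; ring_nf
      have h2 : (-B : ℝ) ^ (-(n:ℤ)) * T^[n] x
          = f n + (-B) ^ (-((n+1:ℕ):ℤ)) * T^[n+1] x := by
        rw [key n, hz, hf]
        push_cast
        ring
      calc x = ∑ j ∈ Finset.range n, f j + (-B) ^ (-(n:ℤ)) * T^[n] x := ih
        _ = _ := by rw [h2]; ring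
  -- bound on the digits
  have hlb : -1 < l := by
    rw [hl, lt_div_iff₀ hB1]; nlinarith
  have hl0 : l < 0 := by
    rw [hl]; exact div_neg_of_neg_of_pos (by linarith) hB1
  have hyb : ∀ j : ℕ, |T^[j] x| ≤ 1 := by
    intro j
    rcases hinv j with ⟨h1, h2⟩
    rw [abs_le]; constructor <;> nlinarith
  have hdb : ∀ j : ℕ, |(d j : ℝ)| ≤ B + 2 := by
    intro j
    rw [hd]
    have h1 : |(-B * T^[j] x - l)| ≤ B + 1 := by
      have := hyb j
      have : |(-B * T^[j] x)| ≤ B := by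
        rw [abs_mul, abs_neg, abs_of_pos hB0]
        nlinarith [abs_nonneg (T^[j] x), hyb j]
      have hla : |l| ≤ 1 := by rw [abs_le]; constructor <;> linarith
      calc |(-B * T^[j] x - l)| ≤ |(-B * T^[j] x)| + |l| := abs_sub _ _
        _ ≤ B + 1 := by linarith
    have h3 : (⌊-B * T^[j] x - l⌋ : ℝ) = (-B * T^[j] x - l) - Int.fract (-B * T^[j] x - l) := by
      rw [Int.fract]; ring
    rw [h3]
    have := Int.fract_nonneg (-B * T^[j] x - l)
    have := Int.fract_lt_one (-B * T^[j] x - l)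
    have := abs_le.mp h1
    rw [abs_le]; constructor <;> [nlinarith; nlinarith]
  have habs : ∀ (m : ℤ), |(-B : ℝ) ^ m| = B ^ m := by
    intro m
    rcases m with n | n
    · simp [abs_pow, abs_neg, abs_of_pos hB0]
    · simp [zpow_negSucc, abs_inv, abs_pow, abs_neg, abs_of_pos hB0]
  have hBinv : (0:ℝ) < 1/B := by positivity
  have hBinv1 : (1:ℝ)/B < 1 := by rw [div_lt_one hB0]; exact hB
  -- summability
  have hsum : Summable f := by
    apply Summable.of_norm
    have hcomp : ∀ j : ℕ, ‖f j‖ ≤ ((B+2)/B) * (1/B) ^ j := by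
      intro j
      rw [hf]
      simp only [Real.norm_eq_abs, abs_mul, habs]
      have h1 : B ^ (-((j:ℤ) + 1)) = (1/B) ^ (j+1) := by
        rw [one_div, inv_pow, ← zpow_natCast B (j+1), ← zpow_neg]
        norm_cast
      push_cast at h1 ⊢
      rw [h1, pow_succ]
      have := hdb j
      have hp : (0:ℝ) ≤ (1/B)^j := by positivity
      calc |(d j : ℝ)| * ((1/B)^j * (1/B)) ≤ (B+2) * ((1/B)^j * (1/B)) := by
            apply mul_le_mul_of_nonneg_right this; positivity
        _ = ((B+2)/B) * (1/B) ^ j := by ring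
    exact Summable.of_nonneg_of_le (fun j => norm_nonneg _) hcomp
      ((summable_geometric_of_lt_one hBinv.le hBinv1).mul_left _)
  -- the tail tends to 0
  have htail : Filter.Tendsto (fun n : ℕ => (-B) ^ (-(n:ℤ)) * T^[n] x)
      Filter.atTop (nhds 0) := by
    have h0 : Filter.Tendsto (fun n : ℕ => (1/B) ^ n) Filter.atTop (nhds 0) :=
      tendsto_pow_atTop_nhds_zero_of_lt_one hBinv.le hBinv1
    apply squeeze_zero_norm _ h0
    intro n
    rw [norm_mul, Real.norm_eq_abs, Real.norm_eq_abs, habs]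
    have h1 : B ^ (-(n:ℤ)) = (1/B) ^ n := by
      rw [zpow_neg, zpow_natCast, one_div, inv_pow]
    rw [h1]
    have hp : (0:ℝ) ≤ (1/B)^n := by positivity
    nlinarith [hyb n, abs_nonneg (T^[n] x)]
  -- conclude
  have hps : Filter.Tendsto (fun n : ℕ => ∑ j ∈ Finset.range n, f j)
      Filter.atTop (nhds x) := by
    have : (fun n : ℕ => ∑ j ∈ Finset.range n, f j)
        = fun n : ℕ => x - (-B) ^ (-(n:ℤ)) * T^[n] x := by
      funext n; have := main n; linarith
    rw [this]
    simpa using (tendsto_const_nhds.sub htail)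
  have := hsum.hasSum.tendsto_sum_nat
  exact tendsto_nhds_unique hps this
end
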